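/- Let 0 ≤ k ≤ 2n and let V = (V_i)_{i∈ℤ/2nℤ} ∈ X(k,2n). Then the tuple σV defined by (σV)_i = (V_{−i})^⊥ belongs to X(2n−k,2n): each (V_{−i})^⊥ is a (2n−k)-dimensional subspace of ℂ^{2n}, and τ₁((σV)_i) ⊆ (σV)_{i+1}, i.e. τ₁((V_{−i})^⊥) ⊆ (V_{−i−1})^⊥, for all i ∈ ℤ/2nℤ. -/

import Mathlib

open Matrix

/-- The Gram matrix Ω of the symplectic form: Ω_{s,t} = (−1)^{s+1} if s+t = 2n+1
(1-indexed) and 0 otherwise. -/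
noncomputable def Omega (n : ℕ) : Matrix (Fin (2*n)) (Fin (2*n)) ℂ :=
  Matrix.of fun s t =>
    if ((s : ℕ) + 1) + ((t : ℕ) + 1) = 2*n + 1 then (-1 : ℂ)^((s : ℕ) + 1 + 1) else 0

/-- The symplectic bilinear form ⟨v,w⟩ = vᵀ Ω w on ℂ^{2n}. -/
noncomputable def sform (n : ℕ) (v w : Fin (2*n) → ℂ) : ℂ :=
  v ⬝ᵥ (Omega n).mulVec w

/-- The form, as a linear map in its first argument (second argument fixed). -/
noncomputable def sformL (n : ℕ) (w : Fin (2*n) → ℂ) : (Fin (2*n) → ℂ) →ₗ[ℂ] ℂ where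
  toFun v := sform n v w
  map_add' a b := by simp [sform, add_dotProduct]
  map_smul' c a := by simp [sform, smul_dotProduct]

/-- Orthogonal complement W^⊥ = {v | ⟨v,w⟩ = 0 for all w ∈ W} w.r.t. the symplectic form. -/
noncomputable def sperp (n : ℕ) (W : Submodule ℂ (Fin (2*n) → ℂ)) :
    Submodule ℂ (Fin (2*n) → ℂ) :=
  ⨅ w ∈ W, LinearMap.ker (sformL n w)

theorem mem_sperp {n : ℕ} {W : Submodule ℂ (Fin (2*n) → ℂ)} {v : Fin (2*n) → ℂ} :
    v ∈ sperp n W ↔ ∀ w ∈ W, sform n v w = 0 := by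
  simp [sperp, sformL, LinearMap.mem_ker] <;> rfl

/-- The matrix of the shift map τ₁ : e_j ↦ e_{j+1} (1 ≤ j ≤ 2n−1), e_{2n} ↦ 0. -/
noncomputable def tauMat (n : ℕ) : Matrix (Fin (2*n)) (Fin (2*n)) ℂ :=
  Matrix.of fun s t => if (s : ℕ) = (t : ℕ) + 1 then 1 else 0

-- helpers
lemma neg_one_pow_key {a b : ℕ} (hab : Odd (a + b)) : (-1:ℂ)^a = -(-1)^b := by
  have h1 : (-1:ℂ)^a * (-1)^b = -1 := by rw [← pow_add]; exact hab.neg_one_pow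
  have h2 : (-1:ℂ)^b * (-1)^b = 1 := by
    rw [← pow_add]; exact Even.neg_one_pow (⟨b, rfl⟩ : Even (b + b))
  calc (-1:ℂ)^a = (-1:ℂ)^a * ((-1)^b * (-1)^b) := by rw [h2, mul_one]
    _ = ((-1:ℂ)^a * (-1)^b) * (-1)^b := by ring
    _ = -(-1)^b := by rw [h1]; ring

lemma sum_eq_of_unique {m c : ℕ} (hc : c < m) (f : Fin m → ℂ)
    (h0 : ∀ r : Fin m, (r:ℕ) ≠ c → f r = 0) :
    ∑ r, f r = f ⟨c, hc⟩ := by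
  rw [Finset.sum_eq_single ⟨c, hc⟩]
  · intro b _ hb
    exact h0 b (by simpa [Fin.ext_iff] using hb)
  · simp

lemma omega_transpose (n : ℕ) : (Omega n)ᵀ = -(Omega n) := by
  ext s t
  simp only [transpose_apply, Omega, of_apply, Matrix.neg_apply]
  have hs := s.isLt
  have ht := t.isLt
  by_cases h : ((s:ℕ)+1) + ((t:ℕ)+1) = 2*n+1
  · rw [if_pos (by omega), if_pos h]
    exact neg_one_pow_key ⟨n+1, by omega⟩
  · rw [if_neg (by omega), if_neg h, neg_zero]

lemma omega_mul_omega (n : ℕ) : Omega n * Omega n = -1 := by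
  ext s t
  rw [Matrix.mul_apply]
  have hs := s.isLt
  have ht := t.isLt
  have hc : 2*n - 1 - (s:ℕ) < 2*n := by omega
  rw [sum_eq_of_unique hc _ (fun r hr => by
    simp only [Omega, of_apply]
    rw [if_neg (by have := r.isLt; omega), zero_mul])]
  simp only [Omega, of_apply, Matrix.neg_apply, Matrix.one_apply]
  rw [if_pos (by omega)]
  by_cases hts : t = s
  · subst hts
    rw [if_pos (by omega), if_pos rfl, ← pow_add,
      show ((t:ℕ)+1+1) + ((2*n-1-(t:ℕ))+1+1) = 2*(n+1)+1 by omega]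
    exact Odd.neg_one_pow ⟨n+1, by ring⟩
  · have hts' : (t:ℕ) ≠ (s:ℕ) := fun h => hts (Fin.ext h)
    rw [if_neg (by omega), mul_zero, if_neg (fun h => hts h.symm), neg_zero]

lemma tau_omega (n : ℕ) : (tauMat n)ᵀ * Omega n = -(Omega n * tauMat n) := by
  ext s t
  rw [neg_apply, Matrix.mul_apply, Matrix.mul_apply]
  have hs := s.isLt; have ht := t.isLt
  simp only [transpose_apply, tauMat, Omega, of_apply]
  by_cases hs1 : (s:ℕ)+1 < 2*n
  · rw [sum_eq_of_unique hs1 _ (fun r hr => by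
      rw [if_neg (show ¬((r:ℕ) = (s:ℕ)+1) from hr), zero_mul])]
    by_cases ht1 : (t:ℕ)+1 < 2*n
    · rw [sum_eq_of_unique ht1 _ (fun r hr => by
        rw [if_neg (show ¬((r:ℕ) = (t:ℕ)+1) from hr), mul_zero])]
      simp only [Fin.val_mk, if_pos rfl, one_mul, mul_one]
      by_cases hc : (s:ℕ) + (t:ℕ) + 3 = 2*n + 1
      · rw [if_pos (show (s:ℕ)+1+1+((t:ℕ)+1) = 2*n+1 by omega),
          if_pos (show (s:ℕ)+1+((t:ℕ)+1+1) = 2*n+1 by omega), pow_succ, pow_succ]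
        ring
      · rw [if_neg (show ¬((s:ℕ)+1+1+((t:ℕ)+1) = 2*n+1) by omega),
          if_neg (show ¬((s:ℕ)+1+((t:ℕ)+1+1) = 2*n+1) by omega)]
        norm_num
    · rw [Finset.sum_eq_zero (fun r _ => by
        have := r.isLt
        rw [if_neg (show ¬((r:ℕ) = (t:ℕ)+1) by omega), mul_zero]), neg_zero]
      simp only [Fin.val_mk, if_pos rfl, one_mul]
      rw [if_neg (show ¬((s:ℕ)+1+1+((t:ℕ)+1) = 2*n+1) by omega)]
      norm_num
  · rw [Finset.sum_eq_zero (fun r _ => by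
      have := r.isLt
      rw [if_neg (show ¬((r:ℕ) = (s:ℕ)+1) by omega), zero_mul])]
    rw [Finset.sum_eq_zero (fun r _ => by
      by_cases h2 : (r:ℕ) = (t:ℕ)+1
      · rw [if_neg (show ¬((s:ℕ)+1+((r:ℕ)+1) = 2*n+1) by omega), zero_mul]
      · rw [if_neg (show ¬((r:ℕ) = (t:ℕ)+1) from h2), mul_zero]), neg_zero]

lemma sform_tau (n : ℕ) (v w : Fin (2*n) → ℂ) :
    sform n ((tauMat n).mulVec v) w = - sform n v ((tauMat n).mulVec w) := by
  unfold sform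
  rw [← Matrix.vecMul_transpose, Matrix.dotProduct_mulVec, Matrix.vecMul_vecMul,
    tau_omega, Matrix.vecMul_neg, neg_dotProduct,
    ← Matrix.dotProduct_mulVec, ← Matrix.mulVec_mulVec]

lemma sform_skew (n : ℕ) (a b : Fin (2*n) → ℂ) : sform n a b = - sform n b a := by
  unfold sform
  have h : (Omega n).mulVec a = -(Matrix.vecMul a (Omega n)) := by
    rw [← Matrix.vecMul_transpose, omega_transpose, Matrix.vecMul_neg]
  rw [h, dotProduct_neg, neg_neg, Matrix.dotProduct_mulVec,
    dotProduct_comm]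


lemma toBilin'_omega_apply (n : ℕ) (v w : Fin (2*n) → ℂ) :
    Matrix.toBilin' (Omega n) v w = sform n v w := by
  rw [Matrix.toBilin'_apply']; rfl

lemma omega_det_ne_zero (n : ℕ) : (Omega n).det ≠ 0 := by
  intro h
  have h2 : ((Omega n) * (Omega n)).det = (-1 : Matrix (Fin (2*n)) (Fin (2*n)) ℂ).det := by
    rw [omega_mul_omega]
  rw [Matrix.det_mul, h, mul_zero] at h2
  have h3 : (-1 : Matrix (Fin (2*n)) (Fin (2*n)) ℂ).det = (-1)^(2*n) := by
    rw [show (-1 : Matrix (Fin (2*n)) (Fin (2*n)) ℂ) = -(1 : Matrix _ _ ℂ) from rfl,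
      Matrix.det_neg, Matrix.det_one, mul_one, Fintype.card_fin]
  rw [h3, Even.neg_one_pow ⟨n, by ring⟩] at h2
  exact one_ne_zero h2.symm

lemma omega_nondeg (n : ℕ) : (Matrix.toBilin' (Omega n)).Nondegenerate :=
  Matrix.Nondegenerate.toBilin' (Matrix.nondegenerate_of_det_ne_zero (omega_det_ne_zero n))

lemma omega_refl (n : ℕ) : (Matrix.toBilin' (Omega n)).IsRefl := by
  intro x y h
  rw [toBilin'_omega_apply] at h ⊢
  rw [sform_skew, h, neg_zero]

lemma sperp_eq_orthogonal (n : ℕ) (W : Submodule ℂ (Fin (2*n) → ℂ)) :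
    sperp n W = (Matrix.toBilin' (Omega n)).orthogonal W := by
  ext v
  rw [mem_sperp, LinearMap.BilinForm.mem_orthogonal_iff]
  constructor
  · intro h w hw
    have h2 := h w hw
    rw [sform_skew, neg_eq_zero] at h2
    rw [toBilin'_omega_apply]
    exact h2
  · intro h w hw
    have := h w hw
    rw [toBilin'_omega_apply] at this
    rw [sform_skew, this, neg_zero]

lemma finrank_sperp (n : ℕ) (W : Submodule ℂ (Fin (2*n) → ℂ)) :
    Module.finrank ℂ (sperp n W) = 2*n - Module.finrank ℂ W := by
  rw [sperp_eq_orthogonal,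
    LinearMap.BilinForm.finrank_orthogonal (omega_nondeg n)]
  congr 1
  simp [Module.finrank_pi]

/-- Membership in X(k,2n): a tuple of k-dimensional subspaces of ℂ^{2n} indexed by
ℤ/2nℤ with τ₁(V_i) ⊆ V_{i+1} for all i. -/
def memX (n k : ℕ) (V : ZMod (2*n) → Submodule ℂ (Fin (2*n) → ℂ)) : Prop :=
  (∀ i, Module.finrank ℂ (V i) = k) ∧
  (∀ i, Submodule.map (tauMat n).mulVecLin (V i) ≤ V (i + 1))

/-- if V ∈ X(k,2n), then σV := ((V_{−i})^⊥)_i belongs to X(2n−k,2n):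
each (V_{−i})^⊥ is (2n−k)-dimensional and τ₁((V_{−i})^⊥) ⊆ (V_{−i−1})^⊥ for all i. -/
theorem statement0 (n k : ℕ) (hn : 1 ≤ n) (hk : k ≤ 2*n)
    (V : ZMod (2*n) → Submodule ℂ (Fin (2*n) → ℂ)) (hV : memX n k V) :
    memX n (2*n - k) (fun i => sperp n (V (-i))) := by
  constructor
  · intro i
    rw [finrank_sperp, hV.1 (-i)]
  · intro i
    rintro x ⟨v, hv, rfl⟩
    show (tauMat n).mulVecLin v ∈ sperp n (V (-(i+1)))
    rw [Matrix.mulVecLin_apply, mem_sperp]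
    intro u hu
    rw [sform_tau, neg_eq_zero]
    have h := hV.2 (-(i+1)) (Submodule.mem_map_of_mem hu)
    rw [show (-(i+1) : ZMod (2*n)) + 1 = -i by ring, Matrix.mulVecLin_apply] at h
    exact mem_sperp.mp hv _ h
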